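/- Tverberg's theorem (affine version): let d ≥ 1 and r ≥ 1, and let x_1, …, x_{(d+1)(r−1)+1} be points in ℝ^d (with repetitions allowed). Then the index set {1, …, (d+1)(r−1)+1} can be partitioned into r pairwise disjoint subsets I_1, …, I_r such that the convex hulls of the point sets {x_i : i ∈ I_1}, …, {x_i : i ∈ I_r} have a point in common. -/

import Mathlib

open Finset Set Metric Module
open scoped RealInnerProductSpace

variable {E : Type*} [NormedAddCommGroup E] [InnerProductSpace ℝ E]

/-- Weights representation for membership in the convex hull of a finite range. -/
lemma mem_convexHull_range_iff' {ι : Type*} [Fintype ι] (g : ι → E) (y : E) :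
    y ∈ convexHull ℝ (Set.range g) ↔
      ∃ w : ι → ℝ, (∀ i, 0 ≤ w i) ∧ ∑ i, w i = 1 ∧ ∑ i, w i • g i = y := by
  constructor
  · intro hy
    rw [convexHull_range_eq_exists_affineCombination] at hy
    obtain ⟨s, w, hw0, hw1, hx⟩ := hy
    classical
    refine ⟨fun i => if i ∈ s then w i else 0, fun i => by dsimp only; split <;> simp [hw0, *], ?_, ?_⟩
    · rw [Finset.sum_ite_mem, Finset.univ_inter, hw1]
    · rw [← hx, Finset.affineCombination_eq_linear_combination s g w hw1]
      simp only [ite_smul, zero_smul]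
      rw [Finset.sum_ite_mem, Finset.univ_inter]
  · rintro ⟨w, hw0, hw1, rfl⟩
    exact mem_convexHull_of_exists_fintype w g hw0 hw1 (fun i => Set.mem_range_self i) rfl

/-- The swap step in the proof of the colorful Carathéodory theorem: if the minimizing
selection `σ` has its nearest point `y ≠ 0` lying in the hull of the points away from index `k`,
we can swap the `k`-th point to get a strictly closer hull, a contradiction. -/
lemma swap_step {n r : ℕ} (p : Fin n → Fin r → E) (σ : Fin n → Fin r) (k : Fin n) (y : E)
    (hy0 : y ≠ 0)
    (hmin : ∀ τ : Fin n → Fin r, infDist 0 (convexHull ℝ (Set.range fun i => p i (σ i))) ≤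
      infDist 0 (convexHull ℝ (Set.range fun i => p i (τ i))))
    (hdist : infDist 0 (convexHull ℝ (Set.range fun i => p i (σ i))) = ‖y‖)
    (hyK : y ∈ convexHull ℝ ((fun i => p i (σ i)) '' {i | i ≠ k}))
    (h0k : (0 : E) ∈ convexHull ℝ (Set.range (p k))) : False := by
  classical
  -- find a color `j` with `⟪y, p k j⟫ ≤ 0`
  obtain ⟨j, hj⟩ : ∃ j, ⟪y, p k j⟫ ≤ 0 := by
    by_contra h
    push_neg at h
    have hconv : Convex ℝ {z : E | 0 < ⟪y, z⟫} := by
      intro z1 h1 z2 h2 a b ha hb hab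
      simp only [Set.mem_setOf_eq, inner_add_right, real_inner_smul_right] at *
      rcases lt_or_ge 0 a with ha' | ha'
      · nlinarith
      · have : a = 0 := le_antisymm ha' ha
        subst this
        have : b = 1 := by linarith
        subst this; simpa using h2
    have hsub : Set.range (p k) ⊆ {z : E | 0 < ⟪y, z⟫} := Set.range_subset_iff.2 h
    simpa using convexHull_min hsub hconv h0k
  set σ' := Function.update σ k j with hσ'
  set K' := convexHull ℝ (Set.range fun i => p i (σ' i)) with hK'
  have hy' : y ∈ K' := by
    refine convexHull_mono ?_ hyK
    rintro _ ⟨i, hi, rfl⟩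
    exact ⟨i, by simp [hσ', Function.update_of_ne hi]⟩
  have hqmem : p k j ∈ K' := subset_convexHull ℝ _ ⟨k, by simp [hσ']⟩
  set q := p k j with hq
  set A := ‖y‖ ^ 2 with hA
  set B := ‖q‖ ^ 2 with hB
  have hA0 : 0 < A := by rw [hA]; exact pow_pos (norm_pos_iff.2 hy0) 2
  have hB0 : 0 ≤ B := by positivity
  set t := A / (A + B) with ht
  have hAB : 0 < A + B := by linarith
  have ht0 : 0 < t := div_pos hA0 (by linarith)
  have ht1 : t ≤ 1 := by rw [ht, div_le_one hAB]; linarith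
  have htAB : t * (A + B) = A := by rw [ht]; field_simp
  set z := (1 - t) • y + t • q with hz
  have hzK : z ∈ K' := (convex_convexHull ℝ _) hy' hqmem (by linarith) ht0.le (by ring)
  have hz2 : ‖z‖ ^ 2 < ‖y‖ ^ 2 := by
    have hexp : ‖z‖ ^ 2 = (1 - t) ^ 2 * A + 2 * ((1 - t) * t * ⟪y, q⟫) + t ^ 2 * B := by
      rw [hz, ← real_inner_self_eq_norm_sq]
      simp only [inner_add_add_self, real_inner_smul_left, real_inner_smul_right]
      rw [real_inner_self_eq_norm_sq y, real_inner_self_eq_norm_sq q, real_inner_comm q y]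
      ring
    rw [hexp, ← hA]
    nlinarith [mul_pos ht0 hA0, mul_nonneg (mul_nonneg (by linarith : (0:ℝ) ≤ 1 - t) ht0.le)
      (neg_nonneg.2 hj)]
  have hzy : ‖z‖ < ‖y‖ := by nlinarith [norm_nonneg z, norm_nonneg y]
  have h1 : infDist 0 K' ≤ ‖z‖ := by
    simpa [dist_zero_left] using infDist_le_dist_of_mem (x := (0:E)) hzK
  have h2 := hmin σ'
  rw [hdist] at h2
  linarith

/-- The interior step: if `y ≠ 0` is a strictly positive convex combination of `m = dim + 1`
affinely independent points, then the hull contains a point of strictly smaller norm. -/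
lemma interior_step [FiniteDimensional ℝ E] {m : ℕ} (hm : m = finrank ℝ E + 1)
    (g : Fin m → E) (hai : AffineIndependent ℝ g) (lam : Fin m → ℝ)
    (hpos : ∀ i, 0 < lam i) (hsum : ∑ i, lam i = 1) (y : E)
    (hy : ∑ i, lam i • g i = y) (hy0 : y ≠ 0) :
    ∃ z ∈ convexHull ℝ (Set.range g), ‖z‖ < ‖y‖ := by
  classical
  haveI : Nonempty (Fin m) := Fin.pos_iff_nonempty.1 (by omega)
  have htop : affineSpan ℝ (Set.range g) = ⊤ :=
    hai.affineSpan_eq_top_iff_card_eq_finrank_add_one.2 (by simp [hm])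
  have h0span : (0 : E) ∈ affineSpan ℝ (Set.range g) := by rw [htop]; trivial
  obtain ⟨s, wβ, hwβ1, h0eq⟩ := eq_affineCombination_of_mem_affineSpan h0span
  set β : Fin m → ℝ := fun i => if i ∈ s then wβ i else 0 with hβ
  have hβsum : ∑ i, β i = 1 := by
    rw [hβ]; rw [Finset.sum_ite_mem, Finset.univ_inter, hwβ1]
  have hβeq : ∑ i, β i • g i = 0 := by
    rw [hβ]
    simp only [ite_smul, zero_smul]
    rw [Finset.sum_ite_mem, Finset.univ_inter,
      ← Finset.affineCombination_eq_linear_combination s g wβ hwβ1, ← h0eq]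
  have hne : (Finset.univ : Finset (Fin m)).Nonempty := Finset.univ_nonempty
  set mn := Finset.univ.inf' hne lam with hmn
  set M := Finset.univ.sup' hne (fun i => |β i|) with hM
  have hmn0 : 0 < mn := by
    rw [hmn, Finset.lt_inf'_iff]
    exact fun i _ => hpos i
  have hM0 : 0 ≤ M := by
    have i0 : Fin m := Classical.arbitrary _
    have := Finset.le_sup' (fun i => |β i|) (Finset.mem_univ i0)
    exact le_trans (abs_nonneg (β i0)) this
  set ε := mn / (mn + M + 1) with hε
  have hden : 0 < mn + M + 1 := by linarith
  have hε0 : 0 < ε := div_pos hmn0 hden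
  have hε1 : ε < 1 := by rw [hε, div_lt_one hden]; linarith
  have hεeq : ε * (mn + M + 1) = mn := by rw [hε]; field_simp
  set μ : Fin m → ℝ := fun i => (1 - ε) * lam i + ε * β i with hμ
  have hμ0 : ∀ i, 0 ≤ μ i := by
    intro i
    have h1 : mn ≤ lam i := Finset.inf'_le _ (Finset.mem_univ i)
    have h2 : |β i| ≤ M := Finset.le_sup' (fun i => |β i|) (Finset.mem_univ i)
    have h3 : -M ≤ β i := neg_le_of_abs_le h2
    show 0 ≤ (1 - ε) * lam i + ε * β i
    nlinarith [mul_nonneg (sub_nonneg.2 hε1.le) (sub_nonneg.2 h1),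
      mul_nonneg hε0.le (by linarith : (0:ℝ) ≤ β i + M)]
  have hμsum : ∑ i, μ i = 1 := by
    rw [hμ]
    rw [Finset.sum_add_distrib, ← Finset.mul_sum, ← Finset.mul_sum, hsum, hβsum]
    ring
  have hμeq : ∑ i, μ i • g i = (1 - ε) • y := by
    rw [hμ]
    simp only [add_smul, mul_smul]
    rw [Finset.sum_add_distrib, ← Finset.smul_sum, ← Finset.smul_sum, hy, hβeq, smul_zero,
      add_zero]
  refine ⟨(1 - ε) • y, ?_, ?_⟩
  · exact mem_convexHull_of_exists_fintype μ g hμ0 hμsum (fun i => Set.mem_range_self i) hμeq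
  · rw [norm_smul, Real.norm_eq_abs, abs_of_nonneg (by linarith)]
    have hy' : 0 < ‖y‖ := norm_pos_iff.2 hy0
    nlinarith

/-- **Colorful Carathéodory theorem** (Bárány), for target `0`. -/
theorem colorful_caratheodory [FiniteDimensional ℝ E] {N r : ℕ}
    (hN : N = finrank ℝ E + 1) (hr : 1 ≤ r) (p : Fin N → Fin r → E)
    (h0 : ∀ i, (0 : E) ∈ convexHull ℝ (Set.range (p i))) :
    ∃ σ : Fin N → Fin r, (0 : E) ∈ convexHull ℝ (Set.range fun i => p i (σ i)) := by
  classical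
  haveI : Nonempty (Fin r) := Fin.pos_iff_nonempty.1 hr
  haveI : Nonempty (Fin N) := Fin.pos_iff_nonempty.1 (by omega)
  obtain ⟨σ, hmin⟩ := Finite.exists_min
    (fun τ : Fin N → Fin r => infDist 0 (convexHull ℝ (Set.range fun i => p i (τ i))))
  set g : Fin N → E := fun i => p i (σ i) with hg
  have hcpt : IsCompact (convexHull ℝ (Set.range g)) :=
    (Set.finite_range g).isCompact_convexHull ℝ
  have hKne : (convexHull ℝ (Set.range g)).Nonempty :=
    (Set.range_nonempty g).convexHull
  obtain ⟨y, hyK, hdist⟩ := hcpt.exists_infDist_eq_dist hKne 0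
  rw [dist_zero_left] at hdist
  by_cases hy0 : y = 0
  · exact ⟨σ, hy0 ▸ hyK⟩
  exfalso
  have hyK' := hyK
  rw [convexHull_eq_union] at hyK'
  simp only [Set.mem_iUnion] at hyK'
  obtain ⟨t, hts, hai, hyt⟩ := hyK'
  by_cases hcase : ∃ k, g k ∉ (t : Set E)
  · obtain ⟨k, hk⟩ := hcase
    refine swap_step p σ k y hy0 hmin hdist ?_ (h0 k)
    refine convexHull_mono ?_ hyt
    intro e he
    obtain ⟨i, rfl⟩ := hts he
    exact ⟨i, fun hik => hk (hik ▸ he), rfl⟩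
  · push_neg at hcase
    have hteq : (t : Set E) = Set.range g :=
      le_antisymm hts (Set.range_subset_iff.2 hcase)
    by_cases hinj : Function.Injective g
    · -- `g` is affinely independent
      have hgai : AffineIndependent ℝ g := by
        have hf : ∀ i, g i ∈ t := hcase
        let f : Fin N ↪ t := ⟨fun i => ⟨g i, hf i⟩, fun i j hij =>
          hinj (Subtype.ext_iff.1 hij)⟩
        exact hai.comp_embedding f
      obtain ⟨lam, hlam0, hlam1, hlamy⟩ :=
        (mem_convexHull_range_iff' g y).1 (by rwa [← hteq])
      by_cases hzero : ∃ k, lam k = 0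
      · obtain ⟨k, hk⟩ := hzero
        refine swap_step p σ k y hy0 hmin hdist ?_ (h0 k)
        have hsum' : ∑ i ∈ Finset.univ.erase k, lam i = 1 := by
          rw [Finset.sum_erase_eq_sub (Finset.mem_univ k), hlam1, hk, sub_zero]
        have hcm : (Finset.univ.erase k).centerMass lam g = y := by
          rw [Finset.centerMass_eq_of_sum_1 _ _ hsum', ← hlamy]
          exact Finset.sum_erase _ (by rw [hk, zero_smul])
        rw [← hcm]
        refine Finset.centerMass_mem_convexHull _ (fun i _ => hlam0 i) (by rw [hsum']; norm_num)
          (fun i hi => ?_)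
        exact ⟨i, Finset.ne_of_mem_erase hi, rfl⟩
      · push_neg at hzero
        have hpos : ∀ i, 0 < lam i := fun i => (hlam0 i).lt_of_ne (Ne.symm (hzero i))
        obtain ⟨z, hzK, hzy⟩ := interior_step hN g hgai lam hpos hlam1 y hlamy hy0
        have h1 : infDist 0 (convexHull ℝ (Set.range g)) ≤ ‖z‖ := by
          simpa [dist_zero_left] using infDist_le_dist_of_mem (x := (0:E)) hzK
        rw [hdist] at h1
        linarith
    · -- `g` not injective: some point is redundant
      rw [Function.not_injective_iff] at hinj
      obtain ⟨k', k, hgk, hkk⟩ := hinj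
      refine swap_step p σ k y hy0 hmin hdist ?_ (h0 k)
      refine convexHull_mono ?_ hyt
      rw [hteq]
      rintro _ ⟨i, rfl⟩
      by_cases hik : i = k
      · exact ⟨k', hkk, by rw [hik, ← hgk]⟩
      · exact ⟨i, hik, rfl⟩

/-- The Sarkaria vectors: `r` vectors in `ℝ^(r-1)` summing to zero, such that the only
nonnegative dependences among them are constant. -/
def tvV (r : ℕ) (j : Fin r) (a : Fin (r - 1)) : ℝ :=
  (if (j : ℕ) = (a : ℕ) then 1 else 0) - (if (j : ℕ) = r - 1 then 1 else 0)

lemma sum_ite_coe_eq {r : ℕ} (α : Fin r → ℝ) (c : Fin r) :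
    ∑ j : Fin r, (if (j : ℕ) = (c : ℕ) then α j else 0) = α c := by
  rw [Finset.sum_eq_single c (fun b _ hb => if_neg (fun h => hb (Fin.ext h))) (by simp)]
  simp

lemma tvV_mul_sum {r : ℕ} (hr : 1 ≤ r) (α : Fin r → ℝ) (a : Fin (r - 1)) :
    ∑ j : Fin r, tvV r j a * α j
      = α (Fin.castLE (Nat.sub_le r 1) a) - α ⟨r - 1, by omega⟩ := by
  simp only [tvV, sub_mul, ite_mul, one_mul, zero_mul]
  rw [Finset.sum_sub_distrib]
  have h1 : ∑ j : Fin r, (if (j : ℕ) = (a : ℕ) then α j else 0)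
      = α (Fin.castLE (Nat.sub_le r 1) a) := by
    have := sum_ite_coe_eq α (Fin.castLE (Nat.sub_le r 1) a)
    simpa using this
  have h2 : ∑ j : Fin r, (if (j : ℕ) = r - 1 then α j else 0) = α ⟨r - 1, by omega⟩ := by
    have := sum_ite_coe_eq α ⟨r - 1, by omega⟩
    simpa using this
  rw [h1, h2]

lemma tvV_sum {r : ℕ} (hr : 1 ≤ r) (a : Fin (r - 1)) : ∑ j : Fin r, tvV r j a = 0 := by
  have := tvV_mul_sum hr (fun _ => (1 : ℝ)) a
  simpa using this

/-- **Tverberg's theorem (affine version).** For `d ≥ 1`, `r ≥ 1`, any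
`(d+1)(r-1)+1` points in `ℝ^d` (repetitions allowed) admit a partition of their index
set into `r` pairwise disjoint subsets whose convex hulls have a point in common. -/
theorem tverberg_affine (d r : ℕ) (hd : 1 ≤ d) (hr : 1 ≤ r)
    (x : Fin ((d + 1) * (r - 1) + 1) → (Fin d → ℝ)) :
    ∃ I : Fin r → Finset (Fin ((d + 1) * (r - 1) + 1)),
      (∀ j l, j ≠ l → Disjoint (I j) (I l)) ∧
      (∀ m, ∃ j, m ∈ I j) ∧
      (⋂ j, convexHull ℝ (x '' (I j : Set (Fin ((d + 1) * (r - 1) + 1))))).Nonempty := by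
  classical
  let ι' := Fin (r - 1) × Fin (d + 1)
  let E := EuclideanSpace ℝ ι'
  have hN : (d + 1) * (r - 1) + 1 = finrank ℝ E + 1 := by
    have : finrank ℝ E = (r - 1) * (d + 1) := by
      simp [E, ι', finrank_euclideanSpace, Fintype.card_prod]
    rw [this, Nat.mul_comm]
  let xbar : Fin ((d + 1) * (r - 1) + 1) → Fin (d + 1) → ℝ := fun i k => if h : (k : ℕ) < d then x i ⟨k, h⟩ else 1
  let p : Fin ((d + 1) * (r - 1) + 1) → Fin r → E := fun i j => WithLp.toLp 2 (fun ak : ι' => tvV r j ak.1 * xbar i ak.2)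
  have hrR : (0 : ℝ) < r := by positivity
  have h0 : ∀ i, (0 : E) ∈ convexHull ℝ (Set.range (p i)) := by
    intro i
    refine mem_convexHull_of_exists_fintype (fun _ => (r : ℝ)⁻¹) (p i)
      (fun _ => by positivity) ?_ (fun j => Set.mem_range_self j) ?_
    · rw [Finset.sum_const, Finset.card_univ, Fintype.card_fin, nsmul_eq_mul,
        mul_inv_cancel₀ (ne_of_gt hrR)]
    · ext ak
      have : (∑ j : Fin r, (r : ℝ)⁻¹ • p i j) ak = ∑ j : Fin r, (r : ℝ)⁻¹ * (p i j ak) := by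
        rw [WithLp.ofLp_sum, Finset.sum_apply]; rfl
      rw [this]
      show ∑ j : Fin r, (r : ℝ)⁻¹ * (tvV r j ak.1 * xbar i ak.2) = 0
      rw [← Finset.mul_sum, ← Finset.sum_mul, tvV_sum hr]
      ring
  obtain ⟨σ, hσ⟩ := colorful_caratheodory hN hr p h0
  obtain ⟨w, hw0, hw1, hweq⟩ := (mem_convexHull_range_iff' _ _).1 hσ
  set I : Fin r → Finset (Fin ((d + 1) * (r - 1) + 1)) := fun j => Finset.univ.filter (fun i => σ i = j) with hI
  have hmemI : ∀ {i j}, i ∈ I j ↔ σ i = j := by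
    intro i j; simp [hI]
  refine ⟨I, ?_, fun m => ⟨σ m, hmemI.2 rfl⟩, ?_⟩
  · intro j l hjl
    rw [Finset.disjoint_left]
    intro i hi hi'
    exact hjl ((hmemI.1 hi) ▸ (hmemI.1 hi') ▸ rfl)
  -- coordinates of the Sarkaria identity
  have hcoord : ∀ ak : ι', ∑ i, w i * (tvV r (σ i) ak.1 * xbar i ak.2) = 0 := by
    intro ak
    have h1 := congrArg (fun v : E => v ak) hweq
    have h2 : (∑ i, w i • p i (σ i)) ak = ∑ i, w i * (tvV r (σ i) ak.1 * xbar i ak.2) := by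
      rw [WithLp.ofLp_sum, Finset.sum_apply]; rfl
    rw [h2] at h1
    exact h1
  set c : Fin r → Fin (d + 1) → ℝ := fun j k => ∑ i ∈ I j, w i * xbar i k with hcdef
  have key : ∀ (a : Fin (r - 1)) (k : Fin (d + 1)), ∑ j, tvV r j a * c j k = 0 := by
    intro a k
    have e1 : ∀ j, tvV r j a * c j k = ∑ i ∈ I j, w i * (tvV r (σ i) a * xbar i k) := by
      intro j
      rw [hcdef, Finset.mul_sum]
      refine Finset.sum_congr rfl fun i hi => ?_
      rw [hmemI.1 hi]
      ring
    rw [Finset.sum_congr rfl fun j _ => e1 j, hI,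
      Finset.sum_fiberwise Finset.univ σ (fun i => w i * (tvV r (σ i) a * xbar i k))]
    exact hcoord (a, k)
  set rl : Fin r := ⟨r - 1, by omega⟩ with hrl
  have hc : ∀ j k, c j k = c rl k := by
    intro j k
    by_cases hj : (j : ℕ) = r - 1
    · congr 1; exact Fin.ext hj
    · have hjlt : (j : ℕ) < r - 1 := by have := j.isLt; omega
      have hk := key ⟨j, hjlt⟩ k
      rw [tvV_mul_sum hr (fun j => c j k) ⟨j, hjlt⟩] at hk
      have hca : Fin.castLE (Nat.sub_le r 1) (⟨(j : ℕ), hjlt⟩ : Fin (r - 1)) = j :=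
        Fin.ext rfl
      rw [hca] at hk
      have : c j k - c rl k = 0 := hk
      linarith [this]
  set dlast : Fin (d + 1) := ⟨d, by omega⟩ with hdlast
  have hxbar_last : ∀ i, xbar i dlast = 1 := fun i => dif_neg (by simp [hdlast])
  have hS : ∀ j, ∑ i ∈ I j, w i = c j dlast := by
    intro j
    rw [hcdef]
    exact Finset.sum_congr rfl fun i _ => by rw [hxbar_last i, mul_one]
  have hStot : ∑ j, ∑ i ∈ I j, w i = 1 := by
    rw [hI, Finset.sum_fiberwise Finset.univ σ w]
    exact hw1
  have hcr : (r : ℝ) * c rl dlast = 1 := by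
    have : ∑ j : Fin r, c rl dlast = 1 := by
      rw [← hStot]
      exact Finset.sum_congr rfl fun j _ => by rw [hS j, hc j dlast]
    rwa [Finset.sum_const, Finset.card_univ, Fintype.card_fin, nsmul_eq_mul] at this
  have hpos : ∀ j, 0 < ∑ i ∈ I j, w i := by
    intro j
    rw [hS j, hc j dlast]
    nlinarith
  -- the common point
  let kup : Fin d → Fin (d + 1) := fun k => ⟨k.1, Nat.lt_succ_of_lt k.2⟩
  have hxbar_up : ∀ i k, xbar i (kup k) = x i k := by
    intro i k
    show (if h : (k : ℕ) < d then x i ⟨k, h⟩ else 1) = x i k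
    rw [dif_pos k.2]
  have hT : ∀ j, ∑ i ∈ I j, w i • x i = ∑ i ∈ I rl, w i • x i := by
    intro j
    funext k
    rw [Finset.sum_apply, Finset.sum_apply]
    have e : ∀ j', ∑ i ∈ I j', (w i • x i) k = c j' (kup k) := by
      intro j'
      rw [hcdef]
      exact Finset.sum_congr rfl fun i _ => by
        rw [hxbar_up i k]; rfl
    rw [e j, e rl, hc j (kup k)]
  have hcm : ∀ j, (I j).centerMass w x = (I rl).centerMass w x := by
    intro j
    unfold Finset.centerMass
    rw [hT j, hS j, hS rl, hc j dlast]
  refine ⟨(I rl).centerMass w x, ?_⟩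
  rw [Set.mem_iInter]
  intro j
  rw [← hcm j]
  exact Finset.centerMass_mem_convexHull _ (fun i _ => hw0 i) (hpos j)
    (fun i hi => Set.mem_image_of_mem x (Finset.mem_coe.2 hi))
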